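/- For every finite simple graph G without isolated vertices, G has an LTD-code and the LTD-number of G is at most twice the L-number of G, i.e., γ^LTD(G) ≤ 2·γ^L(G). -/

import Mathlib

open Finset

namespace SepDom

variable {V : Type*} [Fintype V] [DecidableEq V]

/-- The closed neighborhood `N[v]` of a vertex as a `Finset`. -/
def closedNbhd (G : SimpleGraph V) [DecidableRel G.Adj] (v : V) : Finset V :=
  insert v (G.neighborFinset v)

/-- `C` is a dominating set: `N[v] ∩ C ≠ ∅` for all `v`. -/
def IsDomSet (G : SimpleGraph V) [DecidableRel G.Adj] (C : Finset V) : Prop :=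
  ∀ v : V, (closedNbhd G v ∩ C).Nonempty

/-- `C` is a total-dominating set: `N(v) ∩ C ≠ ∅` for all `v`. -/
def IsTotalDomSet (G : SimpleGraph V) [DecidableRel G.Adj] (C : Finset V) : Prop :=
  ∀ v : V, (G.neighborFinset v ∩ C).Nonempty

/-- `C` is a locating set (L-set): the sets `N(v) ∩ C`, `v ∉ C`, are pairwise distinct. -/
def IsLSet (G : SimpleGraph V) [DecidableRel G.Adj] (C : Finset V) : Prop :=
  ∀ u ∉ C, ∀ v ∉ C, G.neighborFinset u ∩ C = G.neighborFinset v ∩ C → u = v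

/-- `C` is an open-separating set (O-set): the sets `N(v) ∩ C` are pairwise distinct. -/
def IsOSet (G : SimpleGraph V) [DecidableRel G.Adj] (C : Finset V) : Prop :=
  ∀ u v : V, G.neighborFinset u ∩ C = G.neighborFinset v ∩ C → u = v

/-- `C` is a closed-separating set (I-set): the sets `N[v] ∩ C` are pairwise distinct. -/
def IsISet (G : SimpleGraph V) [DecidableRel G.Adj] (C : Finset V) : Prop :=
  ∀ u v : V, closedNbhd G u ∩ C = closedNbhd G v ∩ C → u = v

/-- `C` is a full-separating set (F-set): both open- and closed-separating. -/
def IsFSet (G : SimpleGraph V) [DecidableRel G.Adj] (C : Finset V) : Prop :=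
  IsOSet G C ∧ IsISet G C

/-- `G` has open twins: distinct non-adjacent vertices with equal open neighborhoods. -/
def HasOpenTwins (G : SimpleGraph V) [DecidableRel G.Adj] : Prop :=
  ∃ u v : V, u ≠ v ∧ ¬ G.Adj u v ∧ G.neighborFinset u = G.neighborFinset v

/-- `G` has closed twins: distinct adjacent vertices with equal closed neighborhoods. -/
def HasClosedTwins (G : SimpleGraph V) [DecidableRel G.Adj] : Prop :=
  ∃ u v : V, u ≠ v ∧ G.Adj u v ∧ closedNbhd G u = closedNbhd G v

/-- `G` has an isolated vertex: a vertex with empty open neighborhood. -/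
def HasIsolated (G : SimpleGraph V) [DecidableRel G.Adj] : Prop :=
  ∃ v : V, G.neighborFinset v = ∅

/-- The L-number: minimum cardinality of an L-set. -/
noncomputable def lNum (G : SimpleGraph V) [DecidableRel G.Adj] : ℕ :=
  sInf {n | ∃ C : Finset V, IsLSet G C ∧ C.card = n}

/-- The O-number: minimum cardinality of an O-set. -/
noncomputable def oNum (G : SimpleGraph V) [DecidableRel G.Adj] : ℕ :=
  sInf {n | ∃ C : Finset V, IsOSet G C ∧ C.card = n}

/-- The I-number: minimum cardinality of an I-set. -/
noncomputable def iNum (G : SimpleGraph V) [DecidableRel G.Adj] : ℕ :=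
  sInf {n | ∃ C : Finset V, IsISet G C ∧ C.card = n}

/-- The F-number: minimum cardinality of an F-set. -/
noncomputable def fNum (G : SimpleGraph V) [DecidableRel G.Adj] : ℕ :=
  sInf {n | ∃ C : Finset V, IsFSet G C ∧ C.card = n}

/-- The LD-number: minimum cardinality of an LD-code. -/
noncomputable def ldNum (G : SimpleGraph V) [DecidableRel G.Adj] : ℕ :=
  sInf {n | ∃ C : Finset V, IsDomSet G C ∧ IsLSet G C ∧ C.card = n}

/-- The OD-number: minimum cardinality of an OD-code. -/
noncomputable def odNum (G : SimpleGraph V) [DecidableRel G.Adj] : ℕ :=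
  sInf {n | ∃ C : Finset V, IsDomSet G C ∧ IsOSet G C ∧ C.card = n}

/-- The ID-number: minimum cardinality of an ID-code. -/
noncomputable def idNum (G : SimpleGraph V) [DecidableRel G.Adj] : ℕ :=
  sInf {n | ∃ C : Finset V, IsDomSet G C ∧ IsISet G C ∧ C.card = n}

/-- The FD-number: minimum cardinality of an FD-code. -/
noncomputable def fdNum (G : SimpleGraph V) [DecidableRel G.Adj] : ℕ :=
  sInf {n | ∃ C : Finset V, IsDomSet G C ∧ IsFSet G C ∧ C.card = n}

/-- The LTD-number: minimum cardinality of an LTD-code. -/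
noncomputable def ltdNum (G : SimpleGraph V) [DecidableRel G.Adj] : ℕ :=
  sInf {n | ∃ C : Finset V, IsTotalDomSet G C ∧ IsLSet G C ∧ C.card = n}

/-- The OTD-number: minimum cardinality of an OTD-code. -/
noncomputable def otdNum (G : SimpleGraph V) [DecidableRel G.Adj] : ℕ :=
  sInf {n | ∃ C : Finset V, IsTotalDomSet G C ∧ IsOSet G C ∧ C.card = n}

/-- The ITD-number: minimum cardinality of an ITD-code. -/
noncomputable def itdNum (G : SimpleGraph V) [DecidableRel G.Adj] : ℕ :=
  sInf {n | ∃ C : Finset V, IsTotalDomSet G C ∧ IsISet G C ∧ C.card = n}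

/-- The FTD-number: minimum cardinality of an FTD-code. -/
noncomputable def ftdNum (G : SimpleGraph V) [DecidableRel G.Adj] : ℕ :=
  sInf {n | ∃ C : Finset V, IsTotalDomSet G C ∧ IsFSet G C ∧ C.card = n}

end SepDom

open SepDom

private lemma lset_mono {V : Type*} [Fintype V] [DecidableEq V]
    (G : SimpleGraph V) [DecidableRel G.Adj] {L D : Finset V}
    (hL : IsLSet G L) (hLD : L ⊆ D) : IsLSet G D := by
  intro u hu v hv h
  apply hL u (fun h' => hu (hLD h')) v (fun h' => hv (hLD h'))
  have hDL : D ∩ L = L := inter_eq_right.mpr hLD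
  calc G.neighborFinset u ∩ L = G.neighborFinset u ∩ (D ∩ L) := by rw [hDL]
    _ = (G.neighborFinset u ∩ D) ∩ L := by rw [inter_assoc]
    _ = (G.neighborFinset v ∩ D) ∩ L := by rw [h]
    _ = G.neighborFinset v ∩ (D ∩ L) := by rw [inter_assoc]
    _ = G.neighborFinset v ∩ L := by rw [hDL]


theorem ltd_le_two_mul_l {V : Type*} [Fintype V] [DecidableEq V]
    (G : SimpleGraph V) [DecidableRel G.Adj] (hIso : ¬ HasIsolated G) :
    (∃ C : Finset V, IsTotalDomSet G C ∧ IsLSet G C) ∧ ltdNum G ≤ 2 * lNum G := by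
  classical
  have hdeg : ∀ v : V, (G.neighborFinset v).Nonempty := by
    intro v
    rw [Finset.nonempty_iff_ne_empty]
    exact fun h => hIso ⟨v, h⟩
  have hunivTD : IsTotalDomSet G (univ : Finset V) := by
    intro v; simpa using hdeg v
  have hunivL : IsLSet G (univ : Finset V) := by
    intro u hu; simp at hu
  refine ⟨⟨univ, hunivTD, hunivL⟩, ?_⟩
  have hne : {n | ∃ C : Finset V, IsLSet G C ∧ C.card = n}.Nonempty :=
    ⟨(univ : Finset V).card, univ, hunivL, rfl⟩
  obtain ⟨L, hLset, hLcard⟩ := Nat.sInf_mem hne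
  set g : V → V := fun c => (hdeg c).choose with hg
  have hgmem : ∀ c, g c ∈ G.neighborFinset c := fun c => (hdeg c).choose_spec
  -- It suffices to exhibit an LTD-code of size ≤ 2 * L.card
  suffices h : ∃ D : Finset V, IsTotalDomSet G D ∧ IsLSet G D ∧ D.card ≤ 2 * L.card by
    obtain ⟨D, hTD, hDL, hDcard⟩ := h
    have h1 : ltdNum G ≤ D.card := Nat.sInf_le ⟨D, hTD, hDL, rfl⟩
    rw [lNum, ← hLcard]
    omega
  by_cases hw : ∃ w, w ∉ L ∧ G.neighborFinset w ∩ L = ∅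
  · obtain ⟨w, hwL, hwN⟩ := hw
    obtain ⟨x, hx⟩ := hdeg w
    have hxL : x ∉ L := by
      intro h
      have : x ∈ G.neighborFinset w ∩ L := mem_inter.mpr ⟨hx, h⟩
      rw [hwN] at this
      exact absurd this (Finset.notMem_empty x)
    have hxw : x ≠ w := fun h => G.irrefl (h ▸ (G.mem_neighborFinset w x).mp hx)
    have hxN : (G.neighborFinset x ∩ L).Nonempty := by
      rw [Finset.nonempty_iff_ne_empty]
      intro h
      exact hxw (hLset x hxL w hwL (h.trans hwN.symm))
    obtain ⟨c₀, hc₀⟩ := hxN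
    have hc₀L : c₀ ∈ L := (mem_inter.mp hc₀).2
    have hxc₀ : x ∈ G.neighborFinset c₀ := by
      rw [SimpleGraph.mem_neighborFinset]
      exact ((SimpleGraph.mem_neighborFinset _ _ _).mp (mem_inter.mp hc₀).1).symm
    set S : Finset V := L.filter (fun c => G.neighborFinset c ∩ insert x L = ∅) with hS
    set D : Finset V := insert x L ∪ S.image g with hD
    have hLD : L ⊆ D := fun a ha => mem_union_left _ (mem_insert_of_mem ha)
    refine ⟨D, ?_, lset_mono G hLset hLD, ?_⟩
    · intro v
      by_cases hvx : (G.neighborFinset v ∩ insert x L).Nonempty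
      · obtain ⟨y, hy⟩ := hvx
        exact ⟨y, mem_inter.mpr ⟨(mem_inter.mp hy).1,
          mem_union_left _ (mem_inter.mp hy).2⟩⟩
      · rw [Finset.not_nonempty_iff_eq_empty] at hvx
        by_cases hvL : v ∈ L
        · refine ⟨g v, mem_inter.mpr ⟨hgmem v, mem_union_right _ ?_⟩⟩
          exact mem_image_of_mem g (mem_filter.mpr ⟨hvL, hvx⟩)
        · have hvE : G.neighborFinset v ∩ L = ∅ := by
            rw [← Finset.subset_empty, ← hvx]
            exact inter_subset_inter (Subset.refl _) (subset_insert _ _)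
          have hvw : v = w := hLset v hvL w hwL (hvE.trans hwN.symm)
          exfalso
          have : x ∈ G.neighborFinset v ∩ insert x L :=
            mem_inter.mpr ⟨hvw ▸ hx, mem_insert_self _ _⟩
          rw [hvx] at this
          exact Finset.notMem_empty x this
    · have hc₀S : c₀ ∉ S := by
        intro h
        have := (mem_filter.mp h).2
        have hxm : x ∈ G.neighborFinset c₀ ∩ insert x L :=
          mem_inter.mpr ⟨hxc₀, mem_insert_self _ _⟩
        rw [this] at hxm
        exact Finset.notMem_empty x hxm
      have hsub : S ⊆ L.erase c₀ := fun a ha =>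
        mem_erase.mpr ⟨fun h => hc₀S (h ▸ ha), (mem_filter.mp ha).1⟩
      have h1 : D.card ≤ (insert x L).card + (S.image g).card := card_union_le _ _
      have h2 : (insert x L).card ≤ L.card + 1 := card_insert_le _ _
      have h3 : (S.image g).card ≤ S.card := card_image_le
      have h4 : S.card ≤ (L.erase c₀).card := card_le_card hsub
      have h5 : (L.erase c₀).card = L.card - 1 := card_erase_of_mem hc₀L
      have h6 : 1 ≤ L.card := card_pos.mpr ⟨c₀, hc₀L⟩
      omega
  · push_neg at hw
    set S : Finset V := L.filter (fun c => G.neighborFinset c ∩ L = ∅) with hS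
    set D : Finset V := L ∪ S.image g with hD
    have hLD : L ⊆ D := fun a ha => mem_union_left _ ha
    refine ⟨D, ?_, lset_mono G hLset hLD, ?_⟩
    · intro v
      by_cases hvx : (G.neighborFinset v ∩ L).Nonempty
      · obtain ⟨y, hy⟩ := hvx
        exact ⟨y, mem_inter.mpr ⟨(mem_inter.mp hy).1,
          mem_union_left _ (mem_inter.mp hy).2⟩⟩
      · rw [Finset.not_nonempty_iff_eq_empty] at hvx
        by_cases hvL : v ∈ L
        · refine ⟨g v, mem_inter.mpr ⟨hgmem v, mem_union_right _ ?_⟩⟩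
          exact mem_image_of_mem g (mem_filter.mpr ⟨hvL, hvx⟩)
        · exact absurd hvx (Finset.nonempty_iff_ne_empty.mp (hw v hvL))
    · have h1 : D.card ≤ L.card + (S.image g).card := card_union_le _ _
      have h3 : (S.image g).card ≤ S.card := card_image_le
      have h4 : S.card ≤ L.card := card_le_card (filter_subset _ _)
      omega
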